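/- arXiv:2401.15470 — 3 statements merged into one kernel-verified Lean document; each statement's English description precedes it below -/
import Mathlib

section
/- For any vectors λ, μ ∈ ℝⁿ and real r ≥ 2, there is a constant C_r > 0 depending only on r such that | |λ|^{r-2} λ - |μ|^{r-2} μ | ≤ C_r (|λ| + |μ|)^{r-2} |λ - μ|. -/
/-- Key scalar inequality: `(a^s - b^s) * b ≤ s * (a+b)^s * (a-b)` for `0 ≤ s`, `0 ≤ b ≤ a`. -/
lemma key_ineq (s a b : ℝ) (hs : 0 ≤ s) (hb : 0 ≤ b) (hba : b ≤ a) :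
    (a ^ s - b ^ s) * b ≤ s * (a + b) ^ s * (a - b) := by
  rcases eq_or_lt_of_le hba with h | hlt
  · subst h
    simp
  rcases eq_or_lt_of_le hb with h | hb0
  · subst h
    simp only [sub_zero, mul_zero, add_zero]
    positivity
  -- 0 < b < a : mean value theorem for x ↦ x ^ s on [b, a]
  have ha0 : 0 < a := hb0.trans hlt
  obtain ⟨c, hc, hceq⟩ := exists_hasDerivAt_eq_slope (fun x => x ^ s)
      (fun x => s * x ^ (s - 1)) hlt
      (fun x hx => (Real.continuousAt_rpow_const x s
        (Or.inr hs)).continuousWithinAt)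
      (fun x hx => Real.hasDerivAt_rpow_const
        (Or.inl (ne_of_gt (hb0.trans hx.1))))
  have hc0 : 0 < c := hb0.trans hc.1
  have hdiff : a ^ s - b ^ s = s * c ^ (s - 1) * (a - b) := by
    have hab : a - b ≠ 0 := sub_ne_zero.mpr (ne_of_gt hlt)
    field_simp at hceq
    linarith [hceq]
  rw [hdiff]
  have h1 : c ^ (s - 1) * b ≤ c ^ s := by
    calc c ^ (s - 1) * b ≤ c ^ (s - 1) * c := by
          exact mul_le_mul_of_nonneg_left (le_of_lt hc.1)
            (le_of_lt (Real.rpow_pos_of_pos hc0 _))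
      _ = c ^ s := by
          rw [← Real.rpow_add_one (ne_of_gt hc0)]
          ring_nf
  have h2 : c ^ s ≤ (a + b) ^ s := by
    apply Real.rpow_le_rpow (le_of_lt hc0) _ hs
    linarith [hc.2]
  have hab0 : 0 ≤ a - b := sub_nonneg.mpr hba
  calc s * c ^ (s - 1) * (a - b) * b = s * (c ^ (s - 1) * b) * (a - b) := by ring
    _ ≤ s * ((a + b) ^ s) * (a - b) := by
        apply mul_le_mul_of_nonneg_right _ hab0
        exact mul_le_mul_of_nonneg_left (h1.trans h2) hs
    _ = s * (a + b) ^ s * (a - b) := rfl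

/-- Vector lemma assuming ‖m‖ ≤ ‖l‖. -/
lemma vec_ineq {n : ℕ} (s : ℝ) (hs : 0 ≤ s) (l m : EuclideanSpace ℝ (Fin n))
    (hml : ‖m‖ ≤ ‖l‖) :
    ‖(‖l‖ ^ s) • l - (‖m‖ ^ s) • m‖ ≤ (1 + s) * (‖l‖ + ‖m‖) ^ s * ‖l - m‖ := by
  set a := ‖l‖ with ha
  set b := ‖m‖ with hbdef
  have hb : (0:ℝ) ≤ b := norm_nonneg m
  have ha0 : (0:ℝ) ≤ a := norm_nonneg l
  have hsplit : (a ^ s) • l - (b ^ s) • m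
      = (a ^ s) • (l - m) + (a ^ s - b ^ s) • m := by
    simp [smul_sub, sub_smul]
  have hpow_le : b ^ s ≤ a ^ s := Real.rpow_le_rpow hb hml hs
  have hnorm_sub : a - b ≤ ‖l - m‖ := by
    have := abs_norm_sub_norm_le l m
    rw [abs_le] at this
    linarith [this.2]
  have h1 : ‖(a ^ s) • (l - m)‖ ≤ a ^ s * ‖l - m‖ := by
    rw [norm_smul, Real.norm_eq_abs, abs_of_nonneg (Real.rpow_nonneg ha0 s)]
  have h2 : ‖(a ^ s - b ^ s) • m‖ ≤ s * (a + b) ^ s * ‖l - m‖ := by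
    rw [norm_smul, Real.norm_eq_abs, abs_of_nonneg (by linarith)]
    calc (a ^ s - b ^ s) * b ≤ s * (a + b) ^ s * (a - b) :=
          key_ineq s a b hs hb hml
      _ ≤ s * (a + b) ^ s * ‖l - m‖ := by
          apply mul_le_mul_of_nonneg_left hnorm_sub
          positivity
  have hA : a ^ s ≤ (a + b) ^ s :=
    Real.rpow_le_rpow ha0 (by linarith) hs
  calc ‖(a ^ s) • l - (b ^ s) • m‖
      ≤ ‖(a ^ s) • (l - m)‖ + ‖(a ^ s - b ^ s) • m‖ := by
        rw [hsplit]; exact norm_add_le _ _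
    _ ≤ a ^ s * ‖l - m‖ + s * (a + b) ^ s * ‖l - m‖ := add_le_add h1 h2
    _ ≤ (a + b) ^ s * ‖l - m‖ + s * (a + b) ^ s * ‖l - m‖ := by
        apply add_le_add_left
        exact mul_le_mul_of_nonneg_right hA (norm_nonneg _)
    _ = (1 + s) * (a + b) ^ s * ‖l - m‖ := by ring

/-- Lemma 2.9 (second inequality): for any vectors `l, m ∈ ℝⁿ` and real `r ≥ 2`,
there is a constant `C > 0` depending only on `r` such that
`| |l|^{r-2} l - |m|^{r-2} m | ≤ C (|l| + |m|)^{r-2} |l - m|`. -/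
theorem stmt1 (r : ℝ) (hr : 2 ≤ r) :
    ∃ C : ℝ, 0 < C ∧ ∀ (n : ℕ) (l m : EuclideanSpace ℝ (Fin n)),
      ‖(‖l‖ ^ (r - 2)) • l - (‖m‖ ^ (r - 2)) • m‖
        ≤ C * (‖l‖ + ‖m‖) ^ (r - 2) * ‖l - m‖ := by
  refine ⟨r - 1, by linarith, fun n l m => ?_⟩
  have hs : (0:ℝ) ≤ r - 2 := by linarith
  have hC : r - 1 = 1 + (r - 2) := by ring
  rw [hC]
  rcases le_total ‖m‖ ‖l‖ with h | h
  · exact vec_ineq (r - 2) hs l m h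
  · have := vec_ineq (r - 2) hs m l h
    have hswap : ‖(‖l‖ ^ (r - 2)) • l - (‖m‖ ^ (r - 2)) • m‖
        = ‖(‖m‖ ^ (r - 2)) • m - (‖l‖ ^ (r - 2)) • l‖ := by
      rw [← norm_neg]; congr 1; abel
    rw [hswap, add_comm ‖l‖ ‖m‖, ← norm_neg (l - m), neg_sub]
    exact this
end

section
/- For any vectors λ, μ ∈ ℝⁿ and real r ≥ 2, there is a constant c_r > 0 depending only on r such that the inner product ⟨|λ|^{r-2} λ - |μ|^{r-2} μ, λ - μ⟩ ≥ c_r |λ - μ|^r. -/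
open scoped RealInnerProductSpace

/-- Lemma 2.9 (fourth inequality, strong monotonicity): for any vectors `l, m ∈ ℝⁿ`
and real `r ≥ 2`, there is a constant `c > 0` depending only on `r` with
`⟨|l|^{r-2} l - |m|^{r-2} m, l - m⟩ ≥ c |l - m|^r`. -/
theorem stmt2 (r : ℝ) (hr : 2 ≤ r) :
    ∃ c : ℝ, 0 < c ∧ ∀ (n : ℕ) (l m : EuclideanSpace ℝ (Fin n)),
      ⟪(‖l‖ ^ (r - 2)) • l - (‖m‖ ^ (r - 2)) • m, l - m⟫ ≥ c * ‖l - m‖ ^ r := by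
  have hp : (0:ℝ) ≤ r - 2 := by linarith
  refine ⟨(2:ℝ) ^ (1 - r), Real.rpow_pos_of_pos two_pos _, fun n l m => ?_⟩
  set a := ‖l‖ with ha
  set b := ‖m‖ with hb
  set d := ‖l - m‖ with hd
  have ha0 : 0 ≤ a := norm_nonneg _
  have hb0 : 0 ≤ b := norm_nonneg _
  have hd0 : 0 ≤ d := norm_nonneg _
  set t := ⟪l, m⟫ with ht
  have hE : ⟪(a ^ (r-2)) • l - (b ^ (r-2)) • m, l - m⟫
      = a ^ (r-2) * (a^2 - t) + b ^ (r-2) * (b^2 - t) := by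
    simp only [inner_sub_left, inner_sub_right, real_inner_smul_left,
      real_inner_self_eq_norm_sq, ← ha, ← hb]
    have hml : (⟪m, l⟫ : ℝ) = t := by rw [ht]; exact real_inner_comm l m
    rw [hml]
    ring
  have hdsq : d^2 = a^2 + b^2 - 2*t := by
    rw [hd, @norm_sub_sq_real]
    ring
  rcases eq_or_lt_of_le hd0 with hd00 | hdpos
  · have hlm : l = m := by
      have : l - m = 0 := by
        rw [← norm_eq_zero]; exact hd00.symm
      exact sub_eq_zero.mp this
    have hr0 : (0:ℝ) ^ r = 0 := Real.zero_rpow (by linarith)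
    rw [← hd00, hr0, hlm]
    simp
  · -- main case
    have A0 : 0 ≤ a ^ (r-2) := Real.rpow_nonneg ha0 _
    have B0 : 0 ≤ b ^ (r-2) := Real.rpow_nonneg hb0 _
    -- step 1
    have key : (a ^ (r-2) - b ^ (r-2)) * (a^2 - b^2) ≥ 0 := by
      rcases le_total a b with h | h
      · have h1 : a ^ (r-2) ≤ b ^ (r-2) := Real.rpow_le_rpow ha0 h hp
        have h2 : a^2 ≤ b^2 := by nlinarith
        nlinarith
      · have h1 : b ^ (r-2) ≤ a ^ (r-2) := Real.rpow_le_rpow hb0 h hp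
        have h2 : b^2 ≤ a^2 := by nlinarith
        nlinarith
    have step1 : a ^ (r-2) * (a^2 - t) + b ^ (r-2) * (b^2 - t)
        ≥ (1/2) * (a ^ (r-2) + b ^ (r-2)) * d^2 := by
      rw [hdsq]; nlinarith [key]
    -- step 2 : d^(r-2) ≤ 2^(r-2) * (a^(r-2) + b^(r-2))
    have hdab : d ≤ a + b := by rw [hd, ha, hb]; exact norm_sub_le l m
    have hmax : d ≤ 2 * max a b := by
      calc d ≤ a + b := hdab
        _ ≤ max a b + max a b := add_le_add (le_max_left a b) (le_max_right a b)
        _ = 2 * max a b := by ring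
    have hmax0 : 0 ≤ max a b := le_trans ha0 (le_max_left a b)
    have step2 : d ^ (r-2) ≤ 2 ^ (r-2) * (a ^ (r-2) + b ^ (r-2)) := by
      have h1 : d ^ (r-2) ≤ (2 * max a b) ^ (r-2) :=
        Real.rpow_le_rpow hd0 hmax hp
      have h2 : (2 * max a b) ^ (r-2) = 2 ^ (r-2) * (max a b) ^ (r-2) :=
        Real.mul_rpow (by norm_num) hmax0
      have h3 : (max a b) ^ (r-2) ≤ a ^ (r-2) + b ^ (r-2) := by
        rcases max_cases a b with ⟨hc, _⟩ | ⟨hc, _⟩ <;> rw [hc] <;> linarith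
      calc d ^ (r-2) ≤ 2 ^ (r-2) * (max a b) ^ (r-2) := by rw [← h2]; exact h1
        _ ≤ 2 ^ (r-2) * (a ^ (r-2) + b ^ (r-2)) :=
            mul_le_mul_of_nonneg_left h3 (Real.rpow_nonneg (by norm_num) _)
    -- combine
    have hdr : d ^ r = d ^ (r-2) * d^2 := by
      rw [← Real.rpow_natCast d 2, ← Real.rpow_add hdpos]
      norm_num
    have h21 : (2:ℝ) ^ (1-r) * 2 ^ (r-2) = 1/2 := by
      rw [← Real.rpow_add two_pos, show (1:ℝ) - r + (r - 2) = -1 by ring,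
        Real.rpow_neg_one]
      norm_num
    have h2pos : (0:ℝ) < 2 ^ (1-r) := Real.rpow_pos_of_pos two_pos _
    have stepc : (2:ℝ) ^ (1-r) * d ^ (r-2) ≤ (1/2) * (a ^ (r-2) + b ^ (r-2)) := by
      calc (2:ℝ) ^ (1-r) * d ^ (r-2)
          ≤ 2 ^ (1-r) * (2 ^ (r-2) * (a ^ (r-2) + b ^ (r-2))) :=
            mul_le_mul_of_nonneg_left step2 h2pos.le
        _ = (2 ^ (1-r) * 2 ^ (r-2)) * (a ^ (r-2) + b ^ (r-2)) := by ring
        _ = (1/2) * (a ^ (r-2) + b ^ (r-2)) := by rw [h21]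
    rw [hE, ge_iff_le]
    have hd2 : (0:ℝ) ≤ d^2 := sq_nonneg d
    calc (2:ℝ) ^ (1-r) * d ^ r = (2 ^ (1-r) * d ^ (r-2)) * d^2 := by
          rw [hdr]; ring
      _ ≤ ((1/2) * (a ^ (r-2) + b ^ (r-2))) * d^2 :=
          mul_le_mul_of_nonneg_right stepc hd2
      _ ≤ _ := by linarith [step1]
end

section
/- For any vectors λ, μ ∈ ℝⁿ and real r ≥ 4, there is a constant C_r > 0 depending only on r such that | |λ|^{r-2} - |μ|^{r-2} - (r-2)|μ|^{r-4} ⟨μ, λ-μ⟩ | ≤ C_r (|λ|^{r-4} + |μ|^{r-4}) |λ - μ|². -/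
open scoped RealInnerProductSpace

/-- One-sided Lipschitz estimate for `rpow`: for `p ≥ 1` and `0 ≤ a ≤ b`,
`0 ≤ b^p - a^p ≤ p b^{p-1} (b - a)` (mean value theorem). -/
lemma rpow_lip_aux (p : ℝ) (hp : 1 ≤ p) {a b : ℝ} (ha : 0 ≤ a) (hab : a ≤ b) :
    a ^ p ≤ b ^ p ∧ b ^ p - a ^ p ≤ p * b ^ (p - 1) * (b - a) := by
  have hmono : a ^ p ≤ b ^ p := Real.rpow_le_rpow ha hab (by linarith)
  refine ⟨hmono, ?_⟩
  rcases eq_or_lt_of_le hab with rfl | h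
  · simp
  · have hcont : ContinuousOn (fun x : ℝ => x ^ p) (Set.Icc a b) := fun x _ =>
      (Real.continuousAt_rpow_const x p (Or.inr (by linarith))).continuousWithinAt
    have hderiv : ∀ x ∈ Set.Ioo a b, HasDerivAt (fun x : ℝ => x ^ p) (p * x ^ (p - 1)) x :=
      fun x hx => Real.hasDerivAt_rpow_const (Or.inl (by have := hx.1; nlinarith))
    obtain ⟨c, hc, hceq⟩ := exists_hasDerivAt_eq_slope (fun x : ℝ => x ^ p)
      (fun x => p * x ^ (p - 1)) h hcont hderiv
    have hc0 : 0 ≤ c := le_of_lt (lt_of_le_of_lt ha hc.1)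
    have hcb : c ^ (p - 1) ≤ b ^ (p - 1) :=
      Real.rpow_le_rpow hc0 (le_of_lt hc.2) (by linarith)
    have hpos : (0:ℝ) < b - a := by linarith
    have heq : b ^ p - a ^ p = p * c ^ (p - 1) * (b - a) := by
      field_simp at hceq
      linarith [hceq]
    rw [heq]
    have hp0 : (0:ℝ) ≤ p := by linarith
    exact mul_le_mul_of_nonneg_right (mul_le_mul_of_nonneg_left hcb hp0) (le_of_lt hpos)

/-- Second-order scalar Taylor estimate for `t ↦ t^s`, `s ≥ 2`, at nonnegative points. -/
lemma rpow_taylor2 (s : ℝ) (hs : 2 ≤ s) {a b : ℝ} (ha : 0 ≤ a) (hb : 0 ≤ b) :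
    |b ^ s - a ^ s - s * a ^ (s - 1) * (b - a)|
      ≤ 2 * s * (s - 1) * (a ^ (s - 2) + b ^ (s - 2)) * (b - a) ^ 2 := by
  have hs1 : (1:ℝ) ≤ s - 1 := by linarith
  have hs0 : (0:ℝ) ≤ s := by linarith
  have hs10 : (0:ℝ) ≤ s - 1 := by linarith
  have e : s - 1 - 1 = s - 2 := by ring
  rcases lt_trichotomy a b with h | rfl | h
  · -- a < b : MVT on [a,b]
    have hcont : ContinuousOn (fun x : ℝ => x ^ s) (Set.Icc a b) := fun x _ =>
      (Real.continuousAt_rpow_const x s (Or.inr (by linarith))).continuousWithinAt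
    have hderiv : ∀ x ∈ Set.Ioo a b, HasDerivAt (fun x : ℝ => x ^ s) (s * x ^ (s - 1)) x :=
      fun x hx => Real.hasDerivAt_rpow_const (Or.inl (by have := hx.1; nlinarith))
    obtain ⟨c, hc, hceq⟩ := exists_hasDerivAt_eq_slope (fun x : ℝ => x ^ s)
      (fun x => s * x ^ (s - 1)) h hcont hderiv
    have hc0 : 0 ≤ c := le_trans ha (le_of_lt hc.1)
    have hba : (0:ℝ) ≤ b - a := by linarith
    have hmvt : b ^ s - a ^ s = s * c ^ (s - 1) * (b - a) := by
      have hpos : (0:ℝ) < b - a := by linarith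
      field_simp at hceq
      linarith [hceq]
    obtain ⟨hm1, hm2⟩ := rpow_lip_aux (s - 1) hs1 ha (le_of_lt hc.1)
    rw [e] at hm2
    have hcb : c ^ (s - 2) ≤ b ^ (s - 2) :=
      Real.rpow_le_rpow hc0 (le_of_lt hc.2) (by linarith)
    have key : b ^ s - a ^ s - s * a ^ (s - 1) * (b - a)
        = s * (c ^ (s - 1) - a ^ (s - 1)) * (b - a) := by rw [hmvt]; ring
    rw [key, abs_of_nonneg (mul_nonneg (mul_nonneg hs0 (by linarith [hm1])) hba)]
    have hb2 : (0:ℝ) ≤ b ^ (s - 2) := Real.rpow_nonneg hb _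
    have ha2 : (0:ℝ) ≤ a ^ (s - 2) := Real.rpow_nonneg ha _
    calc s * (c ^ (s - 1) - a ^ (s - 1)) * (b - a)
        ≤ s * ((s - 1) * c ^ (s - 2) * (c - a)) * (b - a) :=
          mul_le_mul_of_nonneg_right (mul_le_mul_of_nonneg_left hm2 hs0) hba
      _ ≤ s * ((s - 1) * (b ^ (s - 2) * (b - a))) * (b - a) := by
          have h2 : c ^ (s - 2) * (c - a) ≤ b ^ (s - 2) * (b - a) :=
            mul_le_mul hcb (by linarith [hc.2]) (by linarith [hc.1]) hb2
          have h3 : (s - 1) * (c ^ (s - 2) * (c - a)) ≤ (s - 1) * (b ^ (s - 2) * (b - a)) :=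
            mul_le_mul_of_nonneg_left h2 hs10
          have h4 : s * ((s - 1) * (c ^ (s - 2) * (c - a)))
              ≤ s * ((s - 1) * (b ^ (s - 2) * (b - a))) := mul_le_mul_of_nonneg_left h3 hs0
          calc s * ((s - 1) * c ^ (s - 2) * (c - a)) * (b - a)
              = s * ((s - 1) * (c ^ (s - 2) * (c - a))) * (b - a) := by ring
            _ ≤ s * ((s - 1) * (b ^ (s - 2) * (b - a))) * (b - a) :=
              mul_le_mul_of_nonneg_right h4 hba
      _ ≤ 2 * s * (s - 1) * (a ^ (s - 2) + b ^ (s - 2)) * (b - a) ^ 2 := by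
          have h5 : b ^ (s - 2) ≤ 2 * (a ^ (s - 2) + b ^ (s - 2)) := by linarith
          have hP : (0:ℝ) ≤ s * (s - 1) * (b - a) ^ 2 :=
            mul_nonneg (mul_nonneg hs0 hs10) (sq_nonneg _)
          nlinarith [mul_le_mul_of_nonneg_left h5 hP]
  · simp
  · -- b < a : MVT on [b,a]
    have hcont : ContinuousOn (fun x : ℝ => x ^ s) (Set.Icc b a) := fun x _ =>
      (Real.continuousAt_rpow_const x s (Or.inr (by linarith))).continuousWithinAt
    have hderiv : ∀ x ∈ Set.Ioo b a, HasDerivAt (fun x : ℝ => x ^ s) (s * x ^ (s - 1)) x :=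
      fun x hx => Real.hasDerivAt_rpow_const (Or.inl (by have := hx.1; nlinarith))
    obtain ⟨c, hc, hceq⟩ := exists_hasDerivAt_eq_slope (fun x : ℝ => x ^ s)
      (fun x => s * x ^ (s - 1)) h hcont hderiv
    have hc0 : 0 ≤ c := le_trans hb (le_of_lt hc.1)
    have hab : (0:ℝ) ≤ a - b := by linarith
    have hmvt : a ^ s - b ^ s = s * c ^ (s - 1) * (a - b) := by
      have hpos : (0:ℝ) < a - b := by linarith
      field_simp at hceq
      linarith [hceq]
    obtain ⟨hm1, hm2⟩ := rpow_lip_aux (s - 1) hs1 hc0 (le_of_lt hc.2)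
    rw [e] at hm2
    have key : b ^ s - a ^ s - s * a ^ (s - 1) * (b - a)
        = s * (a ^ (s - 1) - c ^ (s - 1)) * (a - b) := by
      have hb' : b ^ s = a ^ s - s * c ^ (s - 1) * (a - b) := by linarith [hmvt]
      rw [hb']; ring
    rw [key, abs_of_nonneg (mul_nonneg (mul_nonneg hs0 (by linarith [hm1])) hab)]
    have ha2 : (0:ℝ) ≤ a ^ (s - 2) := Real.rpow_nonneg ha _
    have hb2 : (0:ℝ) ≤ b ^ (s - 2) := Real.rpow_nonneg hb _
    calc s * (a ^ (s - 1) - c ^ (s - 1)) * (a - b)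
        ≤ s * ((s - 1) * a ^ (s - 2) * (a - c)) * (a - b) :=
          mul_le_mul_of_nonneg_right (mul_le_mul_of_nonneg_left hm2 hs0) hab
      _ ≤ s * ((s - 1) * a ^ (s - 2) * (a - b)) * (a - b) := by
          have h2 : (s - 1) * a ^ (s - 2) * (a - c) ≤ (s - 1) * a ^ (s - 2) * (a - b) :=
            mul_le_mul_of_nonneg_left (by linarith [hc.1]) (mul_nonneg hs10 ha2)
          exact mul_le_mul_of_nonneg_right (mul_le_mul_of_nonneg_left h2 hs0) hab
      _ ≤ 2 * s * (s - 1) * (a ^ (s - 2) + b ^ (s - 2)) * (b - a) ^ 2 := by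
          have h5 : a ^ (s - 2) ≤ 2 * (a ^ (s - 2) + b ^ (s - 2)) := by linarith
          have hP : (0:ℝ) ≤ s * (s - 1) * (a - b) ^ 2 :=
            mul_nonneg (mul_nonneg hs0 hs10) (sq_nonneg _)
          nlinarith [mul_le_mul_of_nonneg_left h5 hP]

/-- Lemma 2.9 (third inequality, second-order Taylor-type estimate): for vectors
`l, m ∈ ℝⁿ` and real `r ≥ 4`, there is a constant `C > 0` depending only on `r` with
`| |l|^{r-2} - |m|^{r-2} - (r-2)|m|^{r-4} ⟨m, l-m⟩ | ≤ C (|l|^{r-4} + |m|^{r-4}) |l-m|²`. -/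
theorem stmt3 (r : ℝ) (hr : 4 ≤ r) :
    ∃ C : ℝ, 0 < C ∧ ∀ (n : ℕ) (l m : EuclideanSpace ℝ (Fin n)),
      |‖l‖ ^ (r - 2) - ‖m‖ ^ (r - 2) - (r - 2) * ‖m‖ ^ (r - 4) * ⟪m, l - m⟫|
        ≤ C * (‖l‖ ^ (r - 4) + ‖m‖ ^ (r - 4)) * ‖l - m‖ ^ 2 := by
  refine ⟨2 * (r - 2) * (r - 3) + (r - 2), by nlinarith, fun n l m => ?_⟩
  set nl := ‖l‖ with hnl
  set nm := ‖m‖ with hnm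
  have hnl0 : 0 ≤ nl := norm_nonneg l
  have hnm0 : 0 ≤ nm := norm_nonneg m
  -- scalar Taylor estimate
  have ht := rpow_taylor2 (r - 2) (by linarith) hnm0 hnl0
  have e1 : r - 2 - 1 = r - 3 := by ring
  have e2 : r - 2 - 2 = r - 4 := by ring
  rw [e1, e2] at ht
  -- power identity nm^{r-3} = nm^{r-4} * nm
  have hpow : nm ^ (r - 3) = nm ^ (r - 4) * nm := by
    rcases eq_or_lt_of_le hnm0 with h0 | h0
    · rw [← h0, Real.zero_rpow (by linarith : r - 3 ≠ 0), mul_zero]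
    · rw [show r - 3 = r - 4 + 1 by ring, Real.rpow_add_one (ne_of_gt h0)]
  -- inner product expansion
  have hinner : ⟪m, l - m⟫ = ⟪m, l⟫ - nm ^ 2 := by
    rw [inner_sub_right, real_inner_self_eq_norm_sq]
  have hcs : ⟪m, l⟫ ≤ nm * nl := real_inner_le_norm m l
  have hns : ‖l - m‖ ^ 2 = nl ^ 2 - 2 * ⟪m, l⟫ + nm ^ 2 := by
    rw [real_inner_comm]; exact norm_sub_sq_real l m
  -- 0 ≤ nm*nl - ⟪m,l⟫ ≤ ‖l-m‖²/2
  have hY1 : 0 ≤ nm * nl - ⟪m, l⟫ := by linarith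
  have hY2 : nm * nl - ⟪m, l⟫ ≤ ‖l - m‖ ^ 2 / 2 := by nlinarith [sq_nonneg (nl - nm)]
  -- decomposition
  have hdecomp : nl ^ (r - 2) - nm ^ (r - 2) - (r - 2) * nm ^ (r - 4) * ⟪m, l - m⟫
      = (nl ^ (r - 2) - nm ^ (r - 2) - (r - 2) * nm ^ (r - 3) * (nl - nm))
        + (r - 2) * nm ^ (r - 4) * (nm * nl - ⟪m, l⟫) := by
    rw [hinner, hpow]; ring
  rw [hdecomp]
  have habs : |nl - nm| ≤ ‖l - m‖ := abs_norm_sub_norm_le l m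
  have hsq : (nl - nm) ^ 2 ≤ ‖l - m‖ ^ 2 := by
    rw [← sq_abs]; exact pow_le_pow_left₀ (abs_nonneg _) habs 2
  have hm4 : (0:ℝ) ≤ nm ^ (r - 4) := Real.rpow_nonneg hnm0 _
  have hl4 : (0:ℝ) ≤ nl ^ (r - 4) := Real.rpow_nonneg hnl0 _
  have hsum : (0:ℝ) ≤ nm ^ (r - 4) + nl ^ (r - 4) := add_nonneg hm4 hl4
  have hX : |nl ^ (r - 2) - nm ^ (r - 2) - (r - 2) * nm ^ (r - 3) * (nl - nm)|
      ≤ 2 * (r - 2) * (r - 3) * (nm ^ (r - 4) + nl ^ (r - 4)) * ‖l - m‖ ^ 2 := by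
    refine le_trans ht ?_
    have hco : (0:ℝ) ≤ 2 * (r - 2) * (r - 3) * (nm ^ (r - 4) + nl ^ (r - 4)) :=
      mul_nonneg (mul_nonneg (mul_nonneg (by norm_num) (by linarith)) (by linarith)) hsum
    exact mul_le_mul_of_nonneg_left hsq hco
  have hY : |(r - 2) * nm ^ (r - 4) * (nm * nl - ⟪m, l⟫)|
      ≤ (r - 2) * (nm ^ (r - 4) + nl ^ (r - 4)) * ‖l - m‖ ^ 2 := by
    rw [abs_of_nonneg (mul_nonneg (mul_nonneg (by linarith) hm4) hY1)]
    have h1 : (r - 2) * nm ^ (r - 4) * (nm * nl - ⟪m, l⟫)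
        ≤ (r - 2) * nm ^ (r - 4) * (‖l - m‖ ^ 2 / 2) :=
      mul_le_mul_of_nonneg_left hY2 (mul_nonneg (by linarith) hm4)
    have hx2 : (0:ℝ) ≤ ‖l - m‖ ^ 2 := sq_nonneg _
    have h2 : nm ^ (r - 4) * (‖l - m‖ ^ 2 / 2) ≤ (nm ^ (r - 4) + nl ^ (r - 4)) * ‖l - m‖ ^ 2 := by
      nlinarith [mul_le_mul_of_nonneg_right (show nm ^ (r-4) ≤ 2*(nm ^ (r-4) + nl ^ (r-4)) by linarith) hx2]
    have h3 : (r - 2) * (nm ^ (r - 4) * (‖l - m‖ ^ 2 / 2))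
        ≤ (r - 2) * ((nm ^ (r - 4) + nl ^ (r - 4)) * ‖l - m‖ ^ 2) :=
      mul_le_mul_of_nonneg_left h2 (by linarith)
    calc (r - 2) * nm ^ (r - 4) * (nm * nl - ⟪m, l⟫)
        ≤ (r - 2) * nm ^ (r - 4) * (‖l - m‖ ^ 2 / 2) := h1
      _ = (r - 2) * (nm ^ (r - 4) * (‖l - m‖ ^ 2 / 2)) := by ring
      _ ≤ (r - 2) * ((nm ^ (r - 4) + nl ^ (r - 4)) * ‖l - m‖ ^ 2) := h3
      _ = (r - 2) * (nm ^ (r - 4) + nl ^ (r - 4)) * ‖l - m‖ ^ 2 := by ring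
  calc |(nl ^ (r - 2) - nm ^ (r - 2) - (r - 2) * nm ^ (r - 3) * (nl - nm))
        + (r - 2) * nm ^ (r - 4) * (nm * nl - ⟪m, l⟫)|
      ≤ |nl ^ (r - 2) - nm ^ (r - 2) - (r - 2) * nm ^ (r - 3) * (nl - nm)|
        + |(r - 2) * nm ^ (r - 4) * (nm * nl - ⟪m, l⟫)| := abs_add_le _ _
    _ ≤ (2 * (r - 2) * (r - 3) + (r - 2)) * (nl ^ (r - 4) + nm ^ (r - 4)) * ‖l - m‖ ^ 2 := by
        have := hX; have := hY; linarith [hX, hY]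
end
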